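/- Sphere-counting lower bound: Let T̂ be a Cm×Em binary matrix arising from a C×E matrix over F_{2^m} with all C×C submatrices invertible, and let k := pEm < C/2 be an integer. Then the number of distinct matrices of the form T̂Z, as Z ranges over Em×n binary matrices with exactly k ones in each column, is at least binom(Em, k)^n ≥ 2^{H(p)·Emn - n·log₂(Em+1)}. -/

import Mathlib

open Finset

/-- The binary entropy function (base-2 logarithms). -/
noncomputable def binH (q : ℝ) : ℝ := -q * Real.logb 2 q - (1 - q) * Real.logb 2 (1 - q)


-- step identity
lemma tstep (N k i : ℕ) (hk : k ≤ N) (hi : i < N) :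
    (N.choose (i+1) * (k^(i+1) * (N-k)^(N-(i+1)))) * ((i+1) * (N-k))
      = (N.choose i * (k^i * (N-k)^(N-i))) * ((N-i) * k) := by
  have h1 : N.choose (i+1) * (i+1) = N.choose i * (N - i) := Nat.choose_succ_right_eq N i
  have h2 : (N-k)^(N-(i+1)) * (N-k) = (N-k)^(N-i) := by
    rw [← pow_succ]; congr 1; omega
  calc (N.choose (i+1) * (k^(i+1) * (N-k)^(N-(i+1)))) * ((i+1) * (N-k))
      = (N.choose (i+1) * (i+1)) * (k^(i+1) * ((N-k)^(N-(i+1)) * (N-k))) := by ring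
    _ = (N.choose i * (N-i)) * (k^(i+1) * (N-k)^(N-i)) := by rw [h1, h2]
    _ = (N.choose i * (k^i * (N-k)^(N-i))) * ((N-i) * k) := by ring

lemma tmax (N k : ℕ) (hk0 : 0 < k) (hkN : k < N) :
    ∀ i ≤ N, N.choose i * (k^i * (N-k)^(N-i)) ≤ N.choose k * (k^k * (N-k)^(N-k)) := by
  set t : ℕ → ℕ := fun i => N.choose i * (k^i * (N-k)^(N-i)) with ht
  have up : ∀ i < k, t i ≤ t (i+1) := by
    intro i hi
    have hstep := tstep N k i hkN.le (by omega)
    have hle : (i+1) * (N-k) ≤ (N-i) * k := by nlinarith [Nat.sub_add_cancel hkN.le, Nat.sub_add_cancel (show i ≤ N by omega)]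
    have hpos : 0 < (N-i) * k := Nat.mul_pos (by omega) hk0
    have : t i * ((N-i) * k) = t (i+1) * ((i+1) * (N-k)) := hstep.symm
    have h2 : t i * ((N-i) * k) ≤ t (i+1) * ((N-i) * k) := by
      rw [this]; exact Nat.mul_le_mul_left _ hle
    exact Nat.le_of_mul_le_mul_right h2 hpos
  have down : ∀ i, k ≤ i → i < N → t (i+1) ≤ t i := by
    intro i hki hi
    have hstep := tstep N k i hkN.le hi
    have hle : (N-i) * k ≤ (i+1) * (N-k) := by nlinarith [Nat.sub_add_cancel hkN.le, Nat.sub_add_cancel hi.le]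
    have hpos : 0 < (i+1) * (N-k) := Nat.mul_pos (by omega) (by omega)
    have h2 : t (i+1) * ((i+1) * (N-k)) ≤ t i * ((i+1) * (N-k)) := by
      rw [hstep]; exact Nat.mul_le_mul_left _ hle
    exact Nat.le_of_mul_le_mul_right h2 hpos
  have chain1 : ∀ d, d ≤ k → t (k - d) ≤ t k := by
    intro d
    induction d with
    | zero => simp
    | succ d ih =>
      intro hd
      have h1 : t (k - (d+1)) ≤ t (k - (d+1) + 1) := up _ (by omega)
      have h2 : k - (d+1) + 1 = k - d := by omega
      rw [h2] at h1
      exact h1.trans (ih (by omega))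
  have chain2 : ∀ d, k + d ≤ N → t (k + d) ≤ t k := by
    intro d
    induction d with
    | zero => simp
    | succ d ih =>
      intro hd
      have h1 : t (k + d + 1) ≤ t (k + d) := down _ (by omega) (by omega)
      exact (by exact h1 : t (k + (d+1)) ≤ t (k+d)).trans (ih (by omega))
  intro i hi
  rcases le_or_gt i k with h | h
  · have := chain1 (k - i) (by omega)
    rwa [show k - (k - i) = i by omega] at this
  · have := chain2 (i - k) (by omega)
    rwa [show k + (i - k) = i by omega] at this

lemma powN_le (N k : ℕ) (hk0 : 0 < k) (hkN : k < N) :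
    N ^ N ≤ (N + 1) * (N.choose k * (k^k * (N-k)^(N-k))) := by
  have hb : N = k + (N - k) := by omega
  calc N ^ N = ∑ i ∈ range (N+1), k^i * (N-k)^(N-i) * N.choose i := by
        rw (occs := .pos [1]) [hb]; exact add_pow k (N-k) N
    _ ≤ ∑ _i ∈ range (N+1), N.choose k * (k^k * (N-k)^(N-k)) := by
        refine Finset.sum_le_sum fun i hi => ?_
        have := tmax N k hk0 hkN i (by simpa using Nat.lt_succ_iff.mp (mem_range.mp hi))
        linarith [this]
    _ = (N + 1) * (N.choose k * (k^k * (N-k)^(N-k))) := by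
        rw [Finset.sum_const, card_range]; ring

lemma entropy_choose (N k : ℕ) (hk0 : 0 < k) (hkN : k < N) :
    (2 : ℝ) ^ (binH ((k:ℝ)/N) * N - Real.logb 2 ((N:ℝ) + 1)) ≤ (N.choose k : ℝ) := by
  have hN : (0:ℝ) < N := by exact_mod_cast hk0.trans hkN
  have hkR : (0:ℝ) < k := by exact_mod_cast hk0
  have hNk : (0:ℝ) < (N:ℝ) - k := by
    have : (k:ℝ) < N := by exact_mod_cast hkN
    linarith
  have hcast : ((N - k : ℕ) : ℝ) = (N:ℝ) - k := by
    rw [Nat.cast_sub hkN.le]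
  -- exponent equality
  have h1 : Real.logb 2 ((k:ℝ)/N) = Real.logb 2 k - Real.logb 2 N := Real.logb_div (ne_of_gt hkR) (ne_of_gt hN)
  have h2 : (1 - (k:ℝ)/N) = ((N:ℝ) - k)/N := by field_simp
  have h3 : Real.logb 2 (((N:ℝ) - k)/N) = Real.logb 2 ((N:ℝ) - k) - Real.logb 2 N := Real.logb_div (ne_of_gt hNk) (ne_of_gt hN)
  have hexp : binH ((k:ℝ)/N) * N - Real.logb 2 ((N:ℝ)+1)
      = (N:ℝ) * Real.logb 2 N - (k:ℝ) * Real.logb 2 k - ((N:ℝ) - k) * Real.logb 2 ((N:ℝ) - k) - Real.logb 2 ((N:ℝ)+1) := by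
    unfold binH
    rw [h1, h2, h3]
    field_simp
    ring
  -- the quotient
  set Q : ℝ := (N:ℝ)^(N:ℕ) / ((k:ℝ)^(k:ℕ) * ((N:ℝ)-k)^(N-k : ℕ) * ((N:ℝ)+1)) with hQdef
  have hQpos : 0 < Q := by positivity
  have hlogQ : Real.logb 2 Q = (N:ℝ) * Real.logb 2 N - (k:ℝ) * Real.logb 2 k - ((N:ℝ) - k) * Real.logb 2 ((N:ℝ) - k) - Real.logb 2 ((N:ℝ)+1) := by
    rw [hQdef]
    skip
    rw [Real.logb_div (by positivity) (by positivity),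
        Real.logb_mul (by positivity) (by positivity),
        Real.logb_mul (by positivity) (by positivity),
        Real.logb_pow, Real.logb_pow, Real.logb_pow]
    push_cast [hcast]
    ring
  have h2Q : (2:ℝ) ^ (binH ((k:ℝ)/N) * N - Real.logb 2 ((N:ℝ)+1)) = Q := by
    rw [hexp, ← hlogQ]
    exact Real.rpow_logb (by norm_num) (by norm_num) hQpos
  rw [h2Q, hQdef, div_le_iff₀ (by positivity)]
  have := powN_le N k hk0 hkN
  have hcast2 : ((N:ℕ):ℝ)^(N:ℕ) ≤ ((N:ℝ)+1) * ((N.choose k : ℝ) * ((k:ℝ)^k * ((N:ℝ)-k)^(N-k:ℕ))) := by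
    have := powN_le N k hk0 hkN
    calc ((N:ℕ):ℝ)^(N:ℕ) = ((N^N : ℕ) : ℝ) := by push_cast; ring
      _ ≤ (((N + 1) * (N.choose k * (k^k * (N-k)^(N-k))) : ℕ) : ℝ) := by exact_mod_cast this
      _ = ((N:ℝ)+1) * ((N.choose k : ℝ) * ((k:ℝ)^k * ((N:ℝ)-k)^(N-k:ℕ))) := by
          push_cast [hcast]; ring
  calc ((N:ℝ))^(N:ℕ) ≤ ((N:ℝ)+1) * ((N.choose k : ℝ) * ((k:ℝ)^k * ((N:ℝ)-k)^(N-k:ℕ))) := hcast2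
    _ = (N.choose k : ℝ) * ((k:ℝ)^k * ((N:ℝ)-k)^(N-k:ℕ) * ((N:ℝ)+1)) := by ring


lemma key_inj (C E m : ℕ) (hCE : C ≤ E)
    (A : Matrix (Fin C) (Fin E) (GaloisField 2 m))
    (hA : ∀ f : Fin C → Fin E, Function.Injective f → IsUnit (A.submatrix id f))
    (β : GaloisField 2 m ≃ₗ[ZMod 2] (Fin m → ZMod 2))
    (X : Fin E × Fin m → ZMod 2)
    (hsupp : (Finset.univ.filter fun i => X i ≠ 0).card < C)
    (h0 : (Matrix.of fun (q : Fin C × Fin m) (r : Fin E × Fin m) =>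
        β (A q.1 r.1 * β.symm (Pi.single r.2 1)) q.2).mulVec X = 0) :
    X = 0 := by
  classical
  rcases Nat.eq_zero_or_pos m with hm0 | hm0
  · funext i
    exact absurd i.2.2 (by omega)
  haveI : Nonempty (Fin m) := ⟨⟨0, hm0⟩⟩
  set x : Fin E → GaloisField 2 m := fun r => β.symm (fun t => X (r, t)) with hx
  -- step 1: A.mulVec x = 0
  have hAx : A.mulVec x = 0 := by
    funext q
    have hβ : ∀ s, β (A.mulVec x q) s = 0 := by
      intro s
      have h00 : (Matrix.of fun (q : Fin C × Fin m) (r : Fin E × Fin m) =>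
          β (A q.1 r.1 * β.symm (Pi.single r.2 1)) q.2).mulVec X (q, s) = 0 := congrFun h0 (q, s)
      rw [← h00]
      have hxr : ∀ r : Fin E, x r = ∑ t : Fin m, X (r, t) • β.symm (Pi.single t 1) := by
        intro r
        show β.symm (fun t => X (r, t)) = _
        have h1 : (fun t => X (r, t)) = ∑ t : Fin m, X (r, t) • Pi.single t 1 := by
          funext u
          simp [Finset.sum_apply, Pi.single_apply]
        rw [h1, map_sum]
        simp
      rw [show A.mulVec x q = ∑ r, A q r * x r from rfl]
      simp only [hxr, Finset.mul_sum, mul_smul_comm]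
      rw [map_sum]
      simp only [map_sum, map_smul]
      show _ = ∑ i : Fin E × Fin m, _ * X i
      rw [Fintype.sum_prod_type]
      simp [Finset.sum_apply, Pi.smul_apply, smul_eq_mul, mul_comm]
    have h2 : β (A.mulVec x q) = β 0 := by rw [map_zero]; exact funext hβ
    have := β.injective h2
    simpa using this
  -- step 2: support of x small
  set s0 : Finset (Fin E) := Finset.univ.filter (fun r => x r ≠ 0) with hs0
  have hs0card : s0.card < C := by
    have hinj : ∀ r ∈ s0, ∃ t, X (r, t) ≠ 0 := by
      intro r hr
      rw [hs0, mem_filter] at hr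
      by_contra hc
      push_neg at hc
      apply hr.2
      show β.symm (fun t => X (r, t)) = 0
      have h1 : (fun t => X (r, t)) = 0 := funext hc
      rw [h1, map_zero]
    choose ft hft using hinj
    have : s0.card ≤ (Finset.univ.filter fun i : Fin E × Fin m => X i ≠ 0).card := by
      apply Finset.card_le_card_of_injOn
        (fun r => if h : r ∈ s0 then (r, ft r h) else (r, Classical.arbitrary _))
      · intro r hr
        simp only [Finset.mem_coe] at hr ⊢
        simp only [hr, dif_pos, mem_filter, mem_univ, true_and]
        exact hft r hr
      · intro a ha b hb hab
        simp only [Finset.mem_coe] at ha hb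
        simp only [ha, hb, dif_pos] at hab
        exact (Prod.mk.injEq _ _ _ _ ▸ hab).1
    omega
  -- step 3: extend support to a set of size C
  obtain ⟨t0, hsub, hcard⟩ := Finset.exists_superset_card_eq hs0card.le (by simpa using hCE)
  set f : Fin C → Fin E := fun i => (t0.orderIsoOfFin hcard i : Fin E) with hf
  have hfinj : Function.Injective f := fun a b hab =>
    (t0.orderIsoOfFin hcard).injective (Subtype.ext hab)
  have hfim : Finset.univ.image f = t0 := by
    apply Finset.eq_of_subset_of_card_le
    · intro e he
      simp only [mem_image] at he
      obtain ⟨i, _, rfl⟩ := he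
      exact (t0.orderIsoOfFin hcard i).2
    · rw [Finset.card_image_of_injective _ hfinj, card_univ]
      simp [hcard]
  have hxoff : ∀ e ∉ t0, x e = 0 := by
    intro e he
    by_contra hc
    exact he (hsub (by simp [hs0, hc]))
  -- step 4: submatrix kills x ∘ f
  have hM : IsUnit (A.submatrix id f) := hA f hfinj
  have hMx : (A.submatrix id f).mulVec (x ∘ f) = 0 := by
    funext q
    have e1 : (A.submatrix id f).mulVec (x ∘ f) q = ∑ i : Fin C, A q (f i) * x (f i) := rfl
    have e2 : ∑ i : Fin C, A q (f i) * x (f i) = ∑ e ∈ Finset.univ.image f, A q e * x e :=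
      (Finset.sum_image (g := f) (f := fun e => A q e * x e) (fun a _ b _ hab => hfinj hab)).symm
    have e3 : ∑ e ∈ t0, A q e * x e = ∑ e : Fin E, A q e * x e := by
      apply Finset.sum_subset (Finset.subset_univ _)
      intro e _ he
      rw [hxoff e he, mul_zero]
    rw [e1, e2, hfim, e3]
    exact congrFun hAx q
  have hxf : x ∘ f = 0 := by
    have hinj2 := Matrix.mulVec_injective_iff_isUnit.mpr hM
    apply hinj2
    rw [hMx, Matrix.mulVec_zero]
  -- step 5: x = 0 everywhere, hence X = 0
  have hxzero : ∀ e, x e = 0 := by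
    intro e
    by_cases he : e ∈ t0
    · have h4 : e ∈ Finset.univ.image f := hfim ▸ he
      simp only [mem_image] at h4
      obtain ⟨i, _, rfl⟩ := h4
      exact congrFun hxf i
    · exact hxoff e he
  funext ⟨r, t⟩
  have h5 : β.symm (fun t => X (r, t)) = 0 := hxzero r
  have h6 : (fun t => X (r, t)) = 0 := by
    have := congrArg β h5
    rwa [LinearEquiv.apply_symm_apply, map_zero] at this
  exact congrFun h6 t

/-- Sphere-counting lower bound: with `That` the `Cm×Em` binary expansion of a `C×E`
matrix over `F_{2^m}` whose every `C×C` submatrix is invertible, and `k = pEm < C/2`,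
the number of distinct matrices `That·Z`, as `Z` ranges over `Em×n` binary matrices
with exactly `k` ones per column, is at least `binom(Em,k)^n ≥ 2^{H(p)Emn − n·log₂(Em+1)}`. -/
theorem sphere_counting_lower_bound (C E m n k : ℕ) (hC : 0 < C) (hE : 0 < E)
    (hm : 0 < m) (hn : 0 < n) (hCE : C ≤ E) (hk : 2 * k < C)
    (p : ℝ) (hp : p = (k : ℝ) / ((E : ℝ) * m))
    (A : Matrix (Fin C) (Fin E) (GaloisField 2 m))
    (hA : ∀ f : Fin C → Fin E, Function.Injective f → IsUnit (A.submatrix id f))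
    (β : GaloisField 2 m ≃ₗ[ZMod 2] (Fin m → ZMod 2))
    (That : Matrix (Fin C × Fin m) (Fin E × Fin m) (ZMod 2))
    (hThat : That = fun q r => β (A q.1 r.1 * β.symm (Pi.single r.2 1)) q.2)
    (S : Set (Matrix (Fin E × Fin m) (Fin n) (ZMod 2)))
    (hS : S = {Z | ∀ j : Fin n,
      (Finset.univ.filter fun i : Fin E × Fin m => Z i j = 1).card = k}) :
    Nat.choose (E * m) k ^ n ≤ ((fun Z => That * Z) '' S).ncard ∧
    (2 : ℝ) ^ (binH p * ((E : ℝ) * m * n) - (n : ℝ) * Real.logb 2 ((E : ℝ) * m + 1)) ≤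
      ((Nat.choose (E * m) k : ℝ)) ^ n := by
  classical
  constructor
  · -- counting part
    have hinjOn : Set.InjOn (fun Z => That * Z) S := by
      intro Z1 h1 Z2 h2 hEq
      simp only at hEq
      rw [hS] at h1 h2
      have hcol : ∀ j, (fun i => Z1 i j - Z2 i j) = 0 := by
        intro j
        apply key_inj C E m hCE A hA β
        · -- support bound
          have hs1 := h1 j
          have hs2 := h2 j
          have hsub : (Finset.univ.filter fun i : Fin E × Fin m => Z1 i j - Z2 i j ≠ 0)
              ⊆ (Finset.univ.filter fun i => Z1 i j = 1) ∪
                (Finset.univ.filter fun i => Z2 i j = 1) := by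
            intro i hi
            rw [mem_filter] at hi
            have h01 : ∀ a b : ZMod 2, a - b ≠ 0 → a = 1 ∨ b = 1 := by decide
            rcases h01 _ _ hi.2 with h | h
            · exact Finset.mem_union_left _ (by simp [h])
            · exact Finset.mem_union_right _ (by simp [h])
          calc (Finset.univ.filter fun i : Fin E × Fin m => Z1 i j - Z2 i j ≠ 0).card
              ≤ ((Finset.univ.filter fun i : Fin E × Fin m => Z1 i j = 1) ∪
                (Finset.univ.filter fun i => Z2 i j = 1)).card := Finset.card_le_card hsub
            _ ≤ (Finset.univ.filter fun i : Fin E × Fin m => Z1 i j = 1).card +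
                (Finset.univ.filter fun i : Fin E × Fin m => Z2 i j = 1).card :=
                Finset.card_union_le _ _
            _ = 2 * k := by rw [hs1, hs2]; ring
            _ < C := hk
        · -- mulVec vanishes
          have hsubval : (Matrix.of fun (q : Fin C × Fin m) (r : Fin E × Fin m) =>
              β (A q.1 r.1 * β.symm (Pi.single r.2 1)) q.2) = That := by rw [hThat]; rfl
          rw [hsubval]
          have h1' : That.mulVec (fun i => Z1 i j - Z2 i j)
              = That.mulVec (fun i => Z1 i j) - That.mulVec (fun i => Z2 i j) := by
            have : (fun i => Z1 i j - Z2 i j) = (fun i => Z1 i j) - (fun i => Z2 i j) := rfl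
            rw [this, Matrix.mulVec_sub]
          rw [h1']
          have h2' : That.mulVec (fun i => Z1 i j) = fun q => (That * Z1) q j := rfl
          have h3' : That.mulVec (fun i => Z2 i j) = fun q => (That * Z2) q j := rfl
          rw [h2', h3', hEq]
          simp
      ext i j
      have := congrFun (hcol j) i
      simpa [sub_eq_zero] using this
    rw [Set.ncard_image_of_injOn hinjOn]
    -- lower bound on S.ncard
    set Φ : (Fin n → {s : Finset (Fin E × Fin m) // s.card = k}) → Matrix (Fin E × Fin m) (Fin n) (ZMod 2) :=
      fun F => Matrix.of fun i j => if i ∈ (F j).1 then 1 else 0 with hΦ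
    have hrange : Set.range Φ ⊆ S := by
      rintro _ ⟨F, rfl⟩
      rw [hS]
      intro j
      have heq : (Finset.univ.filter fun i : Fin E × Fin m => Φ F i j = 1) = (F j).1 := by
        ext i
        by_cases h : i ∈ (F j).1 <;> simp [hΦ, h]
      rw [heq]
      exact (F j).2
    have hΦinj : Function.Injective Φ := by
      intro F G h
      funext j
      apply Subtype.ext
      ext i
      have h5 : (if i ∈ (F j).1 then (1 : ZMod 2) else 0) = (if i ∈ (G j).1 then 1 else 0) :=
        congrFun (congrFun h i) j
      by_cases hF : i ∈ (F j).1 <;> by_cases hG : i ∈ (G j).1 <;>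
        simp_all [hΦ]
    have hcardD : Fintype.card (Fin n → {s : Finset (Fin E × Fin m) // s.card = k})
        = Nat.choose (E * m) k ^ n := by
      rw [Fintype.card_fun, Fintype.card_finset_len, Fintype.card_prod,
        Fintype.card_fin, Fintype.card_fin, Fintype.card_fin]
    calc Nat.choose (E * m) k ^ n
        = Fintype.card (Fin n → {s : Finset (Fin E × Fin m) // s.card = k}) := hcardD.symm
      _ = (Set.univ : Set (Fin n → {s : Finset (Fin E × Fin m) // s.card = k})).ncard := by
          rw [Set.ncard_univ, Nat.card_eq_fintype_card]
      _ = (Φ '' Set.univ).ncard := (Set.ncard_image_of_injective _ hΦinj).symm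
      _ ≤ S.ncard := Set.ncard_le_ncard (by rw [Set.image_univ]; exact hrange) (Set.toFinite S)
  · -- entropy part
    have hEm : E ≤ E * m := Nat.le_mul_of_pos_right E hm
    have hkEm : k < E * m := by omega
    rcases Nat.eq_zero_or_pos k with hk0 | hk0
    · subst hk0
      have hp0 : p = 0 := by rw [hp]; simp
      have hH : binH p = 0 := by rw [hp0]; unfold binH; simp
      rw [hH, Nat.choose_zero_right]
      simp only [Nat.cast_one, one_pow, zero_mul, zero_sub]
      apply Real.rpow_le_one_of_one_le_of_nonpos (by norm_num)
      have hlog : 0 ≤ Real.logb 2 ((E : ℝ) * m + 1) := by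
        apply Real.logb_nonneg (by norm_num)
        have : (0:ℝ) ≤ (E:ℝ) * m := by positivity
        linarith
      have hn' : (0:ℝ) ≤ (n:ℝ) := by positivity
      nlinarith
    · have key := entropy_choose (E * m) k hk0 hkEm
      have hcast : ((E * m : ℕ) : ℝ) = (E : ℝ) * m := by push_cast; ring
      rw [hcast, ← hp] at key
      have hrw : (2:ℝ) ^ (binH p * ((E:ℝ)*m*(n:ℝ)) - (n:ℝ) * Real.logb 2 ((E:ℝ)*m+1))
          = ((2:ℝ) ^ (binH p * ((E:ℝ)*m) - Real.logb 2 ((E:ℝ)*m+1))) ^ (n : ℕ) := by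
        rw [← Real.rpow_natCast ((2:ℝ) ^ (binH p * ((E:ℝ)*m) - Real.logb 2 ((E:ℝ)*m+1))) n,
          ← Real.rpow_mul (by norm_num)]
        congr 1
        ring
      rw [hrw]
      exact pow_le_pow_left₀ (Real.rpow_nonneg (by norm_num) _) key n
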